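/- The five vertices of a regular pentagon determine exactly three distinct angle values in (0,π), namely π/5, 2π/5, and 3π/5. -/

import Mathlib

open EuclideanGeometry

noncomputable section

abbrev Pt : Type := EuclideanSpace ℝ (Fin 2)

/-- The point (x, y) in the Euclidean plane. -/
def pt (x y : ℝ) : Pt := (WithLp.equiv 2 (Fin 2 → ℝ)).symm ![x, y]

/-- The set of distinct angle values in (0, π) determined by a planar point set. -/
def angleSet (P : Set Pt) : Set ℝ :=
  {θ : ℝ | θ ∈ Set.Ioo 0 Real.pi ∧
    ∃ x ∈ P, ∃ y ∈ P, ∃ z ∈ P, x ≠ y ∧ y ≠ z ∧ x ≠ z ∧ ∠ x y z = θ}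

open Real
open scoped RealInnerProductSpace

def P (θ : ℝ) : Pt := pt (Real.cos θ) (Real.sin θ)

lemma inner_P (θ α β : ℝ) :
    ⟪P (θ + 2*α) - P θ, P (θ + 2*β) - P θ⟫ =
      4 * Real.sin α * Real.sin β * Real.cos (α - β) := by
  simp only [P, pt]
  simp [PiLp.inner_apply, Fin.sum_univ_two, Real.cos_add, Real.sin_add,
    Real.cos_two_mul, Real.sin_two_mul, Real.cos_sub]
  linear_combination
    (4*Real.cos α^2*Real.cos β^2 + 4*Real.sin α*Real.cos α*Real.sin β*Real.cos β
      - 4*Real.cos α^2 - 4*Real.cos β^2 + 4) * (sin_sq_add_cos_sq θ)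
    + (4*(Real.cos β^2 - 1)) * (sin_sq_add_cos_sq α)
    + (-4*Real.sin α^2) * (sin_sq_add_cos_sq β)

lemma norm_P (θ α : ℝ) (h : 0 ≤ Real.sin α) : ‖P (θ + 2*α) - P θ‖ = 2 * Real.sin α := by
  have h2 : ‖P (θ + 2*α) - P θ‖ = Real.sqrt ((2 * Real.sin α)^2) := by
    rw [EuclideanSpace.norm_eq]
    congr 1
    simp [P, pt, Fin.sum_univ_two, Real.cos_add, Real.sin_add, Real.cos_two_mul,
      Real.sin_two_mul]
    linear_combination
      (4*Real.cos α^4 + 4*Real.sin α^2*Real.cos α^2 - 8*Real.cos α^2 + 4) * (sin_sq_add_cos_sq θ)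
      + (4*(Real.cos α^2 - 1)) * (sin_sq_add_cos_sq α)
  rw [h2, Real.sqrt_sq (by linarith)]

lemma angle_P (θ α β : ℝ) (hα : 0 < Real.sin α) (hβ : 0 < Real.sin β) :
    ∠ (P (θ + 2*α)) (P θ) (P (θ + 2*β)) = Real.arccos (Real.cos (α - β)) := by
  rw [EuclideanGeometry.angle, InnerProductGeometry.angle]
  rw [vsub_eq_sub, vsub_eq_sub, inner_P, norm_P θ α hα.le, norm_P θ β hβ.le]
  congr 1
  field_simp
  ring

lemma P_add_int (θ : ℝ) (t : ℤ) : P (θ + t * (2 * Real.pi)) = P θ := by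
  simp [P, Real.cos_add_int_mul_two_pi, Real.sin_add_int_mul_two_pi]

lemma P_mod (m n : ℕ) (h : m % 5 = n % 5) : P (2*Real.pi*m/5) = P (2*Real.pi*n/5) := by
  obtain ⟨t, ht⟩ : ∃ t : ℤ, (n:ℤ) = m + 5 * t := by
    refine ⟨((n:ℤ) - m)/5, ?_⟩
    have : (m:ℤ) % 5 = (n:ℤ) % 5 := by exact_mod_cast congrArg (Nat.cast : ℕ → ℤ) h
    omega
  have harg : (2*Real.pi*n/5 : ℝ) = 2*Real.pi*m/5 + t * (2*Real.pi) := by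
    have hn : (n:ℝ) = m + 5 * t := by exact_mod_cast congrArg (Int.cast : ℤ → ℝ) ht
    rw [hn]; ring
  rw [harg, P_add_int]

def V (k : Fin 5) : Pt := P (2 * Real.pi * k / 5)

lemma V_eq_P (i k : Fin 5) : V i = P (2 * Real.pi * (k.val + (i - k : Fin 5).val) / 5) := by
  have h1 : ((k + (i - k)) : Fin 5) = i := add_sub_cancel k i
  have h2 : (i : ℕ) % 5 = (k.val + (i - k : Fin 5).val) % 5 := by
    conv_lhs => rw [← h1]
    rw [Fin.add_def]
    simp [Nat.mod_mod_of_dvd]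
  have := P_mod _ _ h2.symm
  rw [V]
  rw [← this]
  norm_num

lemma sin_pos_of (a : ℕ) (h1 : 1 ≤ a) (h4 : a ≤ 4) : 0 < Real.sin (Real.pi * a / 5) := by
  apply Real.sin_pos_of_pos_of_lt_pi
  · have : (1:ℝ) ≤ a := by exact_mod_cast h1
    nlinarith [Real.pi_pos]
  · have : (a:ℝ) ≤ 4 := by exact_mod_cast h4
    nlinarith [Real.pi_pos]

lemma angle_V (i k j : Fin 5) (hik : i ≠ k) (hjk : j ≠ k) :
    ∠ (V i) (V k) (V j) =
      |((i - k : Fin 5).val : ℝ) - ((j - k : Fin 5).val : ℝ)| * Real.pi / 5 := by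
  set a := ((i - k : Fin 5)).val with ha
  set b := ((j - k : Fin 5)).val with hb
  have ha0 : i - k ≠ 0 := fun h => hik (by rwa [sub_eq_zero] at h)
  have hb0 : j - k ≠ 0 := fun h => hjk (by rwa [sub_eq_zero] at h)
  have ha1 : 1 ≤ a := Nat.one_le_iff_ne_zero.2 (fun h => ha0 (Fin.ext h))
  have hb1 : 1 ≤ b := Nat.one_le_iff_ne_zero.2 (fun h => hb0 (Fin.ext h))
  have ha4 : a ≤ 4 := Nat.lt_succ_iff.1 (i - k).isLt
  have hb4 : b ≤ 4 := Nat.lt_succ_iff.1 (j - k).isLt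
  have hVi : V i = P (2 * Real.pi * k / 5 + 2 * (Real.pi * a / 5)) := by
    rw [V_eq_P i k, ← ha]; congr 1; push_cast; ring
  have hVj : V j = P (2 * Real.pi * k / 5 + 2 * (Real.pi * b / 5)) := by
    rw [V_eq_P j k, ← hb]; congr 1; push_cast; ring
  have hVk : V k = P (2 * Real.pi * k / 5) := rfl
  rw [hVi, hVj, hVk, angle_P _ _ _ (sin_pos_of a ha1 ha4) (sin_pos_of b hb1 hb4)]
  have harg : (Real.pi * a / 5 - Real.pi * b / 5 : ℝ) = ((a:ℝ) - b) * (Real.pi/5) := by ring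
  rw [harg, ← Real.cos_abs, Real.arccos_cos (abs_nonneg _), abs_mul]
  · rw [abs_of_pos (by positivity : (0:ℝ) < Real.pi/5)]; ring
  · rw [abs_mul, abs_of_pos (by positivity : (0:ℝ) < Real.pi/5)]
    have h3 : |(a:ℝ) - b| ≤ 3 := by
      have h1 : (1:ℝ) ≤ a := by exact_mod_cast ha1
      have h2 : (a:ℝ) ≤ 4 := by exact_mod_cast ha4
      have h1' : (1:ℝ) ≤ b := by exact_mod_cast hb1
      have h2' : (b:ℝ) ≤ 4 := by exact_mod_cast hb4
      rw [abs_le]; constructor <;> linarith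
    nlinarith [Real.pi_pos]

lemma V_ne (i j : Fin 5) (h : i ≠ j) : V i ≠ V j := by
  have ha0 : i - j ≠ 0 := fun hh => h (by rwa [sub_eq_zero] at hh)
  have ha1 : 1 ≤ (i - j : Fin 5).val := Nat.one_le_iff_ne_zero.2 (fun hh => ha0 (Fin.ext hh))
  have ha4 : (i - j : Fin 5).val ≤ 4 := Nat.lt_succ_iff.1 (i - j).isLt
  have hVi : V i = P (2 * Real.pi * j / 5 + 2 * (Real.pi * (i - j : Fin 5).val / 5)) := by
    rw [V_eq_P i j]; congr 1; push_cast; ring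
  have hpos := sin_pos_of _ ha1 ha4
  intro heq
  have hnorm : ‖V i - V j‖ = 2 * Real.sin (Real.pi * (i - j : Fin 5).val / 5) := by
    rw [hVi]; exact norm_P _ _ hpos.le
  rw [heq, sub_self, norm_zero] at hnorm
  linarith

lemma mem_aux (a b : Fin 5) (ha : a ≠ 0) (hb : b ≠ 0) (hab : a ≠ b) :
    |((a.val : ℝ) - (b.val : ℝ))| * Real.pi / 5 ∈
      ({Real.pi/5, 2*Real.pi/5, 3*Real.pi/5} : Set ℝ) := by
  fin_cases a <;> fin_cases b <;> simp_all [Set.mem_insert_iff] <;> norm_num <;>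
    rw [show |((1:ℝ) - 2)| = 1 from by norm_num [abs_of_nonpos]] <;> ring_nf

lemma V_spec (k : Fin 5) :
    V k = pt (Real.cos (2 * Real.pi * k / 5)) (Real.sin (2 * Real.pi * k / 5)) := rfl


theorem stmt12 :
    angleSet {p : Pt | ∃ k : Fin 5,
        p = pt (Real.cos (2 * Real.pi * k / 5)) (Real.sin (2 * Real.pi * k / 5))} =
      {Real.pi / 5, 2 * Real.pi / 5, 3 * Real.pi / 5} := by
  have hmem : ∀ k : Fin 5, V k ∈ {p : Pt | ∃ k : Fin 5,
      p = pt (Real.cos (2 * Real.pi * k / 5)) (Real.sin (2 * Real.pi * k / 5))} :=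
    fun k => ⟨k, (V_spec k).symm ▸ rfl⟩
  ext θ
  constructor
  · rintro ⟨⟨h0, hπ⟩, x, ⟨kx, hkx⟩, y, ⟨ky, hky⟩, z, ⟨kz, hkz⟩, hxy, hyz, hxz, hang⟩
    rw [← V_spec] at hkx hky hkz
    subst hkx hky hkz
    have hxk : kx ≠ ky := fun h => hxy (by rw [h])
    have hzk : kz ≠ ky := fun h => hyz (by rw [h])
    have hab : kx - ky ≠ kz - ky := fun h => hxz (by
      have : kx = kz := by
        have := sub_left_injective (G := Fin 5) h
        exact this
      rw [this])
    rw [angle_V kx ky kz hxk hzk] at hang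
    rw [← hang]
    exact mem_aux _ _ (fun h => hxk (by rwa [sub_eq_zero] at h))
      (fun h => hzk (by rwa [sub_eq_zero] at h)) hab
  · have hpi := Real.pi_pos
    intro hθ
    rcases hθ with h | h | h <;> subst h
    · refine ⟨⟨by linarith, by linarith⟩, V 1, hmem 1, V 0, hmem 0, V 2, hmem 2,
        V_ne 1 0 (by decide), V_ne 0 2 (by decide), V_ne 1 2 (by decide), ?_⟩
      rw [angle_V 1 0 2 (by decide) (by decide)]
      norm_num
    · refine ⟨⟨by linarith, by linarith⟩, V 1, hmem 1, V 0, hmem 0, V 3, hmem 3,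
        V_ne 1 0 (by decide), V_ne 0 3 (by decide), V_ne 1 3 (by decide), ?_⟩
      rw [angle_V 1 0 3 (by decide) (by decide)]
      norm_num
    · refine ⟨⟨by linarith, by linarith⟩, V 1, hmem 1, V 0, hmem 0, V 4, hmem 4,
        V_ne 1 0 (by decide), V_ne 0 4 (by decide), V_ne 1 4 (by decide), ?_⟩
      rw [angle_V 1 0 4 (by decide) (by decide)]
      norm_num
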